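/- Fix d ≥ 1 and D = {0,1,…,d}. If a matrix A ∈ ℝ^{m×n} is universally connected (i.e., for every b ∈ ℝ^m the solution graph G(A,b) on {x ∈ D^n : Ax ≥ b} with edges between solutions at Hamming distance 1 is connected), then A does not have a forbidden pattern. -/

import Mathlib

open Matrix Finset
open scoped Classical

/-- `A` has a forbidden pattern: there are `lam ≥ 1` rows and columns, with
orderings (injective enumerations) `r`, `c`, such that in column `c l` all rows
of the pattern other than `r l`, `r (l+1)` vanish (cyclically), and
`A (r l) (c l) * A (r (l+1)) (c l) < 0` for every `l`. -/
def HasFP {m n : ℕ} (A : Matrix (Fin m) (Fin n) ℝ) : Prop :=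
  ∃ lam : ℕ, ∃ r : Fin (lam + 1) → Fin m, ∃ c : Fin (lam + 1) → Fin n,
    Function.Injective r ∧ Function.Injective c ∧
    (∀ l k : Fin (lam + 1), k ≠ l → k ≠ l + 1 → A (r k) (c l) = 0) ∧
    (∀ l : Fin (lam + 1), A (r l) (c l) * A (r (l + 1)) (c l) < 0)

/-- `A`, restricted to the set `S` of remaining columns, can be eliminated at column `j`. -/
def CanElim {m n : ℕ} (A : Matrix (Fin m) (Fin n) ℝ) (S : Finset (Fin n)) (j : Fin n) : Prop :=
  (∀ i, 0 < A i j → ∀ j' ∈ S, j' ≠ j → A i j' = 0) ∨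
  (∀ i, A i j < 0 → ∀ j' ∈ S, j' ≠ j → A i j' = 0)

/-- `A` has an elimination ordering. -/
def HasEO {m n : ℕ} (A : Matrix (Fin m) (Fin n) ℝ) : Prop :=
  ∃ e : Fin n ≃ Fin n, ∀ t : Fin n,
    CanElim A (Finset.univ.filter fun c => ∀ s : Fin n, s < t → e s ≠ c) (e t)

/-- `x ∈ {0,…,d}ⁿ` is a feasible solution of the integer linear system `A x ≥ b`. -/
def Feas {m n : ℕ} (d : ℕ) (A : Matrix (Fin m) (Fin n) ℝ) (b : Fin m → ℝ)
    (x : Fin n → ℕ) : Prop :=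
  (∀ j, x j ≤ d) ∧ ∀ i, b i ≤ ∑ j, A i j * (x j : ℝ)

/-- Adjacency in the solution graph `G(A,b)`: both endpoints are feasible and
their Hamming distance is `1`. -/
def SGAdj {m n : ℕ} (d : ℕ) (A : Matrix (Fin m) (Fin n) ℝ) (b : Fin m → ℝ)
    (x y : Fin n → ℕ) : Prop :=
  Feas d A b x ∧ Feas d A b y ∧ hammingDist x y = 1

/-- The solution graph `G(A,b)` is connected. -/
def SGConn {m n : ℕ} (d : ℕ) (A : Matrix (Fin m) (Fin n) ℝ) (b : Fin m → ℝ) : Prop :=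
  ∀ x y : Fin n → ℕ, Feas d A b x → Feas d A b y →
    Relation.ReflTransGen (SGAdj d A b) x y

/-- `A` is universally connected. -/
def UnivConn {m n : ℕ} (d : ℕ) (A : Matrix (Fin m) (Fin n) ℝ) : Prop :=
  ∀ b : Fin m → ℝ, SGConn d A b

private lemma hamming_one {n : ℕ} {x y : Fin n → ℕ} (h : hammingDist x y = 1) :
    ∃ t, x t ≠ y t ∧ ∀ j, j ≠ t → x j = y j := by
  rw [hammingDist] at h
  obtain ⟨t, ht⟩ := Finset.card_eq_one.mp h
  refine ⟨t, ?_, ?_⟩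
  · have : t ∈ ({i | x i ≠ y i} : Finset (Fin n)) := ht ▸ Finset.mem_singleton_self t
    simpa using this
  · intro j hj
    by_contra hne
    have : j ∈ ({i | x i ≠ y i} : Finset (Fin n)) := by simpa using hne
    rw [ht] at this
    exact hj (Finset.mem_singleton.mp this)

private lemma main_construction {m n lam : ℕ} (d : ℕ) (hd : 1 ≤ d)
    (A : Matrix (Fin m) (Fin n) ℝ) (hlam : 1 ≤ lam)
    (r : Fin (lam + 1) → Fin m) (c : Fin (lam + 1) → Fin n)
    (hcinj : Function.Injective c)
    (hzero : ∀ l k : Fin (lam + 1), k ≠ l → k ≠ l + 1 → A (r k) (c l) = 0)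
    (hsign : ∀ l : Fin (lam + 1), A (r l) (c l) * A (r (l + 1)) (c l) < 0)
    (hstar : ∀ j, (¬ ∃ k, c k = j) → (∃ l, 0 < A (r l) j) → (∃ l, A (r l) j < 0) →
      ∃ l, A (r l) j ≠ 0 ∧ |A (r l) (c (l - 1))| - |A (r l) (c l)| < |A (r l) j|)
    (hconn : UnivConn d A) : False := by
  -- basic nonvanishing facts
  have hα : ∀ l, A (r l) (c l) ≠ 0 := by
    intro l h
    have := hsign l
    rw [h] at this; simp at this
  have hβ : ∀ l, A (r (l + 1)) (c l) ≠ 0 := by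
    intro l h
    have := hsign l
    rw [h] at this; simp at this
  have hone : (1 : Fin (lam + 1)) ≠ 0 := by
    have h1 : ((1 : Fin (lam + 1)) : ℕ) = 1 := by
      rw [Fin.val_one']
      exact Nat.mod_eq_of_lt (by omega)
    intro h; rw [h] at h1; simp at h1
  have hsub_ne : ∀ l : Fin (lam + 1), l - 1 ≠ l := by
    intro l h
    have := sub_eq_self.mp h
    exact hone this
  set Mixed : Fin n → Prop := fun j => (∃ l, 0 < A (r l) j) ∧ (∃ l, A (r l) j < 0) with hMixed
  -- choose the two witnesses coordinatewise
  have exuw : ∀ j : Fin n, ∃ p : ℕ × ℕ, p.1 ≤ d ∧ p.2 ≤ d ∧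
      (∀ k, c k = j →
        ((0 < A (r k) (c k) → p = (0, 1)) ∧ (A (r k) (c k) < 0 → p = (d, d - 1)))) ∧
      ((¬ ∃ k, c k = j) → p.1 = p.2 ∧
        (Mixed j → ∃ l, (|A (r l) (c (l - 1))| - |A (r l) (c l)| < |A (r l) j|) ∧
            ((0 < A (r l) j ∧ p.1 = d) ∨ (A (r l) j < 0 ∧ p.1 = 0))) ∧
        (¬ Mixed j → ∀ l, ∀ z : ℕ, z ≤ d →
            A (r l) j * (z : ℝ) ≤ A (r l) j * (p.1 : ℝ))) := by
    intro j
    by_cases hc : ∃ k, c k = j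
    · obtain ⟨k, hk⟩ := hc
      rcases lt_trichotomy (A (r k) (c k)) 0 with h | h | h
      · refine ⟨(d, d - 1), le_refl d, by omega, ?_, fun hnc => absurd ⟨k, hk⟩ hnc⟩
        intro k' hk'
        have hkk : k' = k := hcinj (hk'.trans hk.symm)
        subst hkk
        exact ⟨fun hpos => absurd h (by linarith), fun _ => rfl⟩
      · exact absurd h (hα k)
      · refine ⟨(0, 1), by omega, hd, ?_, fun hnc => absurd ⟨k, hk⟩ hnc⟩
        intro k' hk'
        have hkk : k' = k := hcinj (hk'.trans hk.symm)
        subst hkk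
        exact ⟨fun _ => rfl, fun hneg => absurd h (by linarith)⟩
    · by_cases hmix : Mixed j
      · obtain ⟨l, hne0, hlt⟩ := hstar j hc hmix.1 hmix.2
        rcases hne0.lt_or_gt with hneg | hpos
        · refine ⟨(0, 0), by omega, by omega, fun k hk => absurd ⟨k, hk⟩ hc, fun _ => ⟨rfl, ?_, ?_⟩⟩
          · exact fun _ => ⟨l, hlt, Or.inr ⟨hneg, rfl⟩⟩
          · exact fun hnm => absurd hmix hnm
        · refine ⟨(d, d), le_refl d, le_refl d, fun k hk => absurd ⟨k, hk⟩ hc,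
            fun _ => ⟨rfl, ?_, ?_⟩⟩
          · exact fun _ => ⟨l, hlt, Or.inl ⟨hpos, rfl⟩⟩
          · exact fun hnm => absurd hmix hnm
      · by_cases hneg : ∃ l, A (r l) j < 0
        · have hall : ∀ l, A (r l) j ≤ 0 := by
            intro l
            by_contra hpos
            exact hmix ⟨⟨l, not_le.mp hpos⟩, hneg⟩
          refine ⟨(0, 0), by omega, by omega, fun k hk => absurd ⟨k, hk⟩ hc,
            fun _ => ⟨rfl, fun hm => absurd hm hmix, fun _ l z hz => ?_⟩⟩
          have h1 : A (r l) j * (z : ℝ) ≤ 0 :=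
            mul_nonpos_of_nonpos_of_nonneg (hall l) (Nat.cast_nonneg z)
          simpa using h1
        · have hall : ∀ l, 0 ≤ A (r l) j := by
            intro l
            by_contra hneg'
            exact hneg ⟨l, lt_of_not_ge hneg'⟩
          refine ⟨(d, d), le_refl d, le_refl d, fun k hk => absurd ⟨k, hk⟩ hc,
            fun _ => ⟨rfl, fun hm => absurd hm hmix, fun _ l z hz => ?_⟩⟩
          exact mul_le_mul_of_nonneg_left (by exact_mod_cast hz) (hall l)
  choose uw hu_le hw_le hpat hjunk using exuw
  set u : Fin n → ℕ := fun j => (uw j).1 with hu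
  set w : Fin n → ℕ := fun j => (uw j).2 with hw
  have hpatval : ∀ k : Fin (lam + 1),
      (0 < A (r k) (c k) → u (c k) = 0 ∧ w (c k) = 1) ∧
      (A (r k) (c k) < 0 → u (c k) = d ∧ w (c k) = d - 1) := by
    intro k
    have h := hpat (c k) k rfl
    constructor
    · intro hp
      have h2 := h.1 hp
      constructor
      · show (uw (c k)).1 = 0
        rw [h2]
      · show (uw (c k)).2 = 1
        rw [h2]
    · intro hn
      have h2 := h.2 hn
      constructor
      · show (uw (c k)).1 = d
        rw [h2]
      · show (uw (c k)).2 = d - 1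
        rw [h2]
  have hjunk_eq : ∀ j, (¬ ∃ k, c k = j) → u j = w j := fun j hj => (hjunk j hj).1
  set f : Fin m → (Fin n → ℕ) → ℝ := fun i x => ∑ j, A i j * (x j : ℝ) with hf
  set b : Fin m → ℝ := fun i => min (f i u) (f i w) with hb
  have hFu : Feas d A b u := ⟨fun j => hu_le j, fun i => min_le_left _ _⟩
  have hFw : Feas d A b w := ⟨fun j => hw_le j, fun i => min_le_right _ _⟩
  -- the row identity
  have hD : ∀ l : Fin (lam + 1),
      f (r l) w = f (r l) u + (|A (r l) (c l)| - |A (r l) (c (l - 1))|) := by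
    intro l
    have hsum : f (r l) w = f (r l) u + ∑ j, A (r l) j * ((w j : ℝ) - (u j : ℝ)) := by
      simp only [hf]
      rw [← Finset.sum_add_distrib]
      apply Finset.sum_congr rfl
      intro j _
      ring
    have key : ∑ j, A (r l) j * ((w j : ℝ) - (u j : ℝ))
        = |A (r l) (c l)| - |A (r l) (c (l - 1))| := by
      have h1 : ∑ j, A (r l) j * ((w j : ℝ) - (u j : ℝ))
          = ∑ j ∈ Finset.image c Finset.univ, A (r l) j * ((w j : ℝ) - (u j : ℝ)) := by
        symm
        apply Finset.sum_subset (Finset.subset_univ _)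
        intro j _ hj
        have hcj : ¬ ∃ k, c k = j := by
          intro ⟨k, hk⟩
          exact hj (Finset.mem_image.mpr ⟨k, Finset.mem_univ k, hk⟩)
        rw [hjunk_eq j hcj]
        ring
      have h2 : ∑ j ∈ Finset.image c Finset.univ, A (r l) j * ((w j : ℝ) - (u j : ℝ))
          = ∑ k, A (r l) (c k) * ((w (c k) : ℝ) - (u (c k) : ℝ)) :=
        Finset.sum_image (fun x _ y _ h => hcinj h)
      have h3 : ∑ k, A (r l) (c k) * ((w (c k) : ℝ) - (u (c k) : ℝ))
          = ∑ k ∈ ({l, l - 1} : Finset (Fin (lam + 1))),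
              A (r l) (c k) * ((w (c k) : ℝ) - (u (c k) : ℝ)) := by
        symm
        apply Finset.sum_subset (Finset.subset_univ _)
        intro k _ hk
        simp only [Finset.mem_insert, Finset.mem_singleton] at hk
        push_neg at hk
        have hz : A (r l) (c k) = 0 := by
          apply hzero k l
          · exact fun h => hk.1 h.symm
          · intro h
            apply hk.2
            rw [h, add_sub_cancel_right]
        rw [hz]; ring
      have h4 : ∑ k ∈ ({l, l - 1} : Finset (Fin (lam + 1))),
            A (r l) (c k) * ((w (c k) : ℝ) - (u (c k) : ℝ))
          = A (r l) (c l) * ((w (c l) : ℝ) - (u (c l) : ℝ))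
            + A (r l) (c (l - 1)) * ((w (c (l - 1)) : ℝ) - (u (c (l - 1)) : ℝ)) :=
        Finset.sum_pair (hsub_ne l).symm
      have hterm1 : A (r l) (c l) * ((w (c l) : ℝ) - (u (c l) : ℝ)) = |A (r l) (c l)| := by
        rcases (hα l).lt_or_gt with hneg | hpos
        · obtain ⟨hu1, hw1⟩ := (hpatval l).2 hneg
          rw [hu1, hw1, abs_of_neg hneg]
          have hc1 : ((d - 1 : ℕ) : ℝ) = (d : ℝ) - 1 := by
            have : (1 : ℕ) ≤ d := hd
            push_cast [this]
            ring
          rw [hc1]; ring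
        · obtain ⟨hu1, hw1⟩ := (hpatval l).1 hpos
          rw [hu1, hw1, abs_of_pos hpos]
          norm_num
      have hterm2 : A (r l) (c (l - 1)) * ((w (c (l - 1)) : ℝ) - (u (c (l - 1)) : ℝ))
          = - |A (r l) (c (l - 1))| := by
        have hsign' : A (r (l - 1)) (c (l - 1)) * A (r l) (c (l - 1)) < 0 := by
          have := hsign (l - 1)
          rwa [sub_add_cancel] at this
        rcases (hα (l - 1)).lt_or_gt with hneg | hpos
        · -- A (r (l-1)) (c (l-1)) < 0, so A (r l) (c (l-1)) > 0
          have hpos2 : 0 < A (r l) (c (l - 1)) := by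
            rcases mul_neg_iff.mp hsign' with ⟨h1, _⟩ | ⟨_, h2⟩
            · linarith
            · exact h2
          obtain ⟨hu1, hw1⟩ := (hpatval (l - 1)).2 hneg
          rw [hu1, hw1, abs_of_pos hpos2]
          have hc1 : ((d - 1 : ℕ) : ℝ) = (d : ℝ) - 1 := by
            have : (1 : ℕ) ≤ d := hd
            push_cast [this]
            ring
          rw [hc1]; ring
        · have hneg2 : A (r l) (c (l - 1)) < 0 := by
            rcases mul_neg_iff.mp hsign' with ⟨_, h2⟩ | ⟨h1, _⟩
            · exact h2
            · linarith
          obtain ⟨hu1, hw1⟩ := (hpatval (l - 1)).1 hpos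
          rw [hu1, hw1, abs_of_neg hneg2]
          norm_num
      rw [h1, h2, h3, h4, hterm1, hterm2]
      ring
    rw [hsum, key]
  -- the kill lemma
  have hkill : ∀ y : Fin n → ℕ, (∀ j, y j ≤ d) →
      ∀ t, ((∃ k, c k = t) ∨ Mixed t) → y t ≠ u t →
      (∀ j, ((∃ k, c k = j) ∨ Mixed j) → j ≠ t → y j = u j) → ¬ Feas d A b y := by
    intro y hybox t hKt hne hagree hFy
    have hbound : ∀ l : Fin (lam + 1),
        f (r l) y ≤ f (r l) u + A (r l) t * ((y t : ℝ) - (u t : ℝ)) := by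
      intro l
      simp only [hf]
      have hsy := Finset.add_sum_erase Finset.univ (fun j => A (r l) j * (y j : ℝ))
        (Finset.mem_univ t)
      have hsu := Finset.add_sum_erase Finset.univ (fun j => A (r l) j * (u j : ℝ))
        (Finset.mem_univ t)
      have hle : ∑ j ∈ Finset.univ.erase t, A (r l) j * (y j : ℝ)
          ≤ ∑ j ∈ Finset.univ.erase t, A (r l) j * (u j : ℝ) := by
        apply Finset.sum_le_sum
        intro j hj
        have hjt : j ≠ t := Finset.ne_of_mem_erase hj
        by_cases hK : (∃ k, c k = j) ∨ Mixed j
        · rw [hagree j hK hjt]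
        · have hK1 : ¬ ∃ k, c k = j := fun h => hK (Or.inl h)
          have hK2 : ¬ Mixed j := fun h => hK (Or.inr h)
          exact (hjunk j hK1).2.2 hK2 l (y j) (hybox j)
      linarith
    have hcontra : ∀ l : Fin (lam + 1),
        f (r l) y < f (r l) u → f (r l) y < f (r l) w → False := by
      intro l h1 h2
      have hlow : min (f (r l) u) (f (r l) w) ≤ f (r l) y := hFy.2 (r l)
      have := lt_min h1 h2
      linarith
    by_cases hck : ∃ k, c k = t
    · obtain ⟨k, hck⟩ := hck
      subst hck
      have hfw : f (r (k + 1)) w = f (r (k + 1)) u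
          + (|A (r (k + 1)) (c (k + 1))| - |A (r (k + 1)) (c k)|) := by
        have := hD (k + 1)
        rwa [add_sub_cancel_right] at this
      have hαpos : 0 < |A (r (k + 1)) (c (k + 1))| := abs_pos.mpr (hα (k + 1))
      rcases (hα k).lt_or_gt with hneg | hpos
      · -- u (c k) = d and A (r (k+1)) (c k) > 0
        have hu_t : u (c k) = d := ((hpatval k).2 hneg).1
        have hgβ : 0 < A (r (k + 1)) (c k) := by
          rcases mul_neg_iff.mp (hsign k) with ⟨h1, _⟩ | ⟨_, h2⟩
          · linarith
          · exact h2
        have hyt : (y (c k) : ℝ) ≤ (d : ℝ) - 1 := by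
          have h1 : y (c k) < d := lt_of_le_of_ne (hybox _) (by rw [hu_t] at hne; exact hne)
          have h2 : (y (c k) : ℝ) + 1 ≤ (d : ℝ) := by exact_mod_cast h1
          linarith
        have hdrop : A (r (k + 1)) (c k) * ((y (c k) : ℝ) - (u (c k) : ℝ))
            ≤ - A (r (k + 1)) (c k) := by
          rw [hu_t]
          have h3 : (y (c k) : ℝ) - (d : ℝ) ≤ -1 := by linarith
          have h4 := mul_le_mul_of_nonneg_left h3 (le_of_lt hgβ)
          linarith
        have habs : |A (r (k + 1)) (c k)| = A (r (k + 1)) (c k) := abs_of_pos hgβ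
        apply hcontra (k + 1)
        · have := hbound (k + 1)
          linarith
        · have := hbound (k + 1)
          rw [hfw]
          linarith
      · -- u (c k) = 0 and A (r (k+1)) (c k) < 0
        have hu_t : u (c k) = 0 := ((hpatval k).1 hpos).1
        have hgβ : A (r (k + 1)) (c k) < 0 := by
          rcases mul_neg_iff.mp (hsign k) with ⟨_, h2⟩ | ⟨h1, _⟩
          · exact h2
          · linarith
        have hyt : (1 : ℝ) ≤ (y (c k) : ℝ) := by
          have h1 : 1 ≤ y (c k) := by
            rw [hu_t] at hne
            omega
          exact_mod_cast h1
        have hdrop : A (r (k + 1)) (c k) * ((y (c k) : ℝ) - (u (c k) : ℝ))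
            ≤ A (r (k + 1)) (c k) := by
          rw [hu_t]
          have h4 := mul_le_mul_of_nonpos_left hyt (le_of_lt hgβ)
          push_cast at h4 ⊢
          linarith
        have habs : |A (r (k + 1)) (c k)| = - A (r (k + 1)) (c k) := abs_of_neg hgβ
        apply hcontra (k + 1)
        · have := hbound (k + 1)
          linarith
        · have := hbound (k + 1)
          rw [hfw]
          linarith
    · have hmix : Mixed t := hKt.resolve_left hck
      obtain ⟨l, hlt, hdir⟩ := (hjunk t hck).2.1 hmix
      have hfw : f (r l) w = f (r l) u + (|A (r l) (c l)| - |A (r l) (c (l - 1))|) := hD l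
      rcases hdir with ⟨hgpos, hud⟩ | ⟨hgneg, hu0⟩
      · have hu_t : u t = d := hud
        have hyt : (y t : ℝ) ≤ (d : ℝ) - 1 := by
          have h1 : y t < d := lt_of_le_of_ne (hybox _) (by rw [hu_t] at hne; exact hne)
          have h2 : (y t : ℝ) + 1 ≤ (d : ℝ) := by exact_mod_cast h1
          linarith
        have hdrop : A (r l) t * ((y t : ℝ) - (u t : ℝ)) ≤ - A (r l) t := by
          rw [hu_t]
          have h3 : (y t : ℝ) - (d : ℝ) ≤ -1 := by linarith
          have h4 := mul_le_mul_of_nonneg_left h3 (le_of_lt hgpos)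
          linarith
        have habs : |A (r l) t| = A (r l) t := abs_of_pos hgpos
        rw [habs] at hlt
        apply hcontra l
        · have := hbound l
          linarith
        · have := hbound l
          rw [hfw]
          linarith
      · have hu_t : u t = 0 := hu0
        have hyt : (1 : ℝ) ≤ (y t : ℝ) := by
          have h1 : 1 ≤ y t := by
            rw [hu_t] at hne
            omega
          exact_mod_cast h1
        have hdrop : A (r l) t * ((y t : ℝ) - (u t : ℝ)) ≤ A (r l) t := by
          rw [hu_t]
          have h4 := mul_le_mul_of_nonpos_left hyt (le_of_lt hgneg)
          push_cast at h4 ⊢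
          linarith
        have habs : |A (r l) t| = - A (r l) t := abs_of_neg hgneg
        rw [habs] at hlt
        apply hcontra l
        · have := hbound l
          linarith
        · have := hbound l
          rw [hfw]
          linarith
  -- walk the path and contradict
  have hpath : Relation.ReflTransGen (SGAdj d A b) u w := hconn b u w hFu hFw
  have hQ : ∀ z, Relation.ReflTransGen (SGAdj d A b) u z →
      ∀ j, ((∃ k, c k = j) ∨ Mixed j) → z j = u j := by
    intro z hz
    induction hz with
    | refl => intro j _; rfl
    | @tail x' y' hab hbc ih =>
      obtain ⟨hFx, hFy2, hdist⟩ := hbc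
      obtain ⟨t0, hne0, hoth⟩ := hamming_one hdist
      intro j hKj
      by_cases hKt0 : (∃ k, c k = t0) ∨ Mixed t0
      · exfalso
        apply hkill y' hFy2.1 t0 hKt0 ?_ ?_ hFy2
        · have hx'u : x' t0 = u t0 := ih t0 hKt0
          exact fun h => hne0 (hx'u.trans h.symm)
        · intro j' hKj' hj't
          rw [← hoth j' hj't]
          exact ih j' hKj'
      · by_cases hjt : j = t0
        · subst hjt
          exact absurd hKj hKt0
        · rw [← hoth j hjt]
          exact ih j hKj
  have hwq := hQ w hpath (c 0) (Or.inl ⟨0, rfl⟩)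
  rcases (hα 0).lt_or_gt with hneg | hpos
  · obtain ⟨hu1, hw1⟩ := (hpatval 0).2 hneg
    rw [hu1] at hwq
    rw [hw1] at hwq
    omega
  · obtain ⟨hu1, hw1⟩ := (hpatval 0).1 hpos
    rw [hu1] at hwq
    rw [hw1] at hwq
    omega
private lemma inj_pair {γ : Type*} {x y : γ} (hxy : x ≠ y) : Function.Injective ![x, y] := by
  intro a b hab
  fin_cases a <;> fin_cases b <;> simp_all

private lemma fin2_cases : ∀ l k : Fin (1 + 1), k = l ∨ k = l + 1 := by decide

private lemma sign_pair {m' n' : ℕ} {A : Matrix (Fin m') (Fin n') ℝ} {i0 i1 : Fin m'}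
    {j0 j1 : Fin n'} (h0 : A i0 j0 * A i1 j0 < 0) (h1 : A i1 j1 * A i0 j1 < 0) :
    ∀ l : Fin (1 + 1), A (![i0, i1] l) (![j0, j1] l) * A (![i0, i1] (l + 1)) (![j0, j1] l) < 0 := by
  intro l
  fin_cases l
  · simpa using h0
  · simpa using h1

open Fin.NatCast

theorem stmt3 {m n : ℕ} (d : ℕ) (hd : 1 ≤ d) (A : Matrix (Fin m) (Fin n) ℝ)
    (h : UnivConn d A) : ¬ HasFP A := by
  intro hFP
  classical
  obtain ⟨lam0, ⟨r, c, hrinj, hcinj, hzero, hsign⟩, hmin⟩ :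
      ∃ lam0 : ℕ, (∃ r : Fin (lam0 + 1) → Fin m, ∃ c : Fin (lam0 + 1) → Fin n,
        Function.Injective r ∧ Function.Injective c ∧
        (∀ l k : Fin (lam0 + 1), k ≠ l → k ≠ l + 1 → A (r k) (c l) = 0) ∧
        (∀ l : Fin (lam0 + 1), A (r l) (c l) * A (r (l + 1)) (c l) < 0)) ∧
      ∀ k : ℕ, k < lam0 → ¬ (∃ r : Fin (k + 1) → Fin m, ∃ c : Fin (k + 1) → Fin n,
        Function.Injective r ∧ Function.Injective c ∧
        (∀ l k' : Fin (k + 1), k' ≠ l → k' ≠ l + 1 → A (r k') (c l) = 0) ∧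
        (∀ l : Fin (k + 1), A (r l) (c l) * A (r (l + 1)) (c l) < 0)) :=
    ⟨Nat.find hFP, Nat.find_spec hFP, fun k hk => Nat.find_min hFP hk⟩
  rcases lam0 with _ | (_ | lam2)
  · have e : (0 + 1 : Fin 1) = 0 := by decide
    have h2 := hsign 0
    rw [e] at h2
    exact absurd h2 (mul_self_nonneg _).not_gt
  · -- lam0 = 1 : a 2-pattern
    by_cases hEx : ∃ l : Fin (0 + 1 + 1), |A (r l) (c (l - 1))| ≤ |A (r l) (c l)|
    · obtain ⟨l0, hl0⟩ := hEx
      refine main_construction d hd A (le_refl 1) r c hcinj hzero hsign ?_ h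
      intro j hc hpos hneg
      obtain ⟨lp, hp⟩ := hpos
      obtain ⟨ln, hn⟩ := hneg
      have hlpln : lp ≠ ln := by
        intro hh; rw [hh] at hp; linarith
      have hcases : ∀ a b c' : Fin (0 + 1 + 1), b ≠ c' → a = b ∨ a = c' := by decide
      have hne : A (r l0) j ≠ 0 := by
        rcases hcases l0 lp ln hlpln with h1 | h1
        · rw [h1]; exact ne_of_gt hp
        · rw [h1]; exact ne_of_lt hn
      exact ⟨l0, hne, by have := abs_pos.mpr hne; linarith⟩
    · push_neg at hEx
      refine main_construction d hd A (le_refl 1) (fun l => r (l + 1)) c hcinj ?_ ?_ ?_ h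
      · intro l k hkl hkl1
        exfalso
        have hcases : ∀ l k : Fin (0 + 1 + 1), k = l ∨ k = l + 1 := by decide
        rcases hcases l k with h1 | h1
        exacts [hkl h1, hkl1 h1]
      · intro l
        show A (r (l + 1)) (c l) * A (r (l + 1 + 1)) (c l) < 0
        have h2 : ∀ l : Fin (0 + 1 + 1), l + 1 + 1 = l := by decide
        rw [h2, mul_comm]
        exact hsign l
      · intro j hc hpos hneg
        obtain ⟨lp, hp0⟩ := hpos
        have hp : 0 < A (r (lp + 1)) j := hp0
        have e1 : ∀ l : Fin (0 + 1 + 1), l + 1 = l - 1 := by decide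
        have e2 : ∀ l : Fin (0 + 1 + 1), l - 1 - 1 = l := by decide
        have hne2 : A (r (lp - 1)) j ≠ 0 := by rw [← e1 lp]; exact ne_of_gt hp
        refine ⟨lp, ?_, ?_⟩
        · show A (r (lp + 1)) j ≠ 0
          exact ne_of_gt hp
        · show |A (r (lp + 1)) (c (lp - 1))| - |A (r (lp + 1)) (c lp)| < |A (r (lp + 1)) j|
          rw [e1 lp]
          have h5 := hEx (lp - 1)
          rw [e2 lp] at h5
          have h6 : 0 < |A (r (lp - 1)) j| := abs_pos.mpr hne2
          linarith
  · -- lam0 ≥ 2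
    refine main_construction d hd A (by omega) r c hcinj hzero hsign ?_ h
    intro j hc hpos hneg
    exfalso
    have hPg : ∃ g : ℕ, ∃ p : Fin (lam2 + 1 + 1 + 1), 0 < A (r p) j ∧
        A (r (p + (g : Fin (lam2 + 1 + 1 + 1)))) j < 0 := by
      obtain ⟨p0, hp0⟩ := hpos
      obtain ⟨q0, hq0⟩ := hneg
      refine ⟨(q0 - p0 : Fin (lam2 + 1 + 1 + 1)).val, p0, hp0, ?_⟩
      rw [Fin.cast_val_eq_self, add_comm, sub_add_cancel]
      exact hq0
    obtain ⟨g0, ⟨p, hppos, hpgneg⟩, hg0min⟩ :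
        ∃ g0 : ℕ, (∃ p : Fin (lam2 + 1 + 1 + 1), 0 < A (r p) j ∧
          A (r (p + (g0 : Fin (lam2 + 1 + 1 + 1)))) j < 0) ∧
        ∀ g' : ℕ, g' < g0 → ¬ (∃ p : Fin (lam2 + 1 + 1 + 1), 0 < A (r p) j ∧
          A (r (p + (g' : Fin (lam2 + 1 + 1 + 1)))) j < 0) :=
      ⟨Nat.find hPg, Nat.find_spec hPg, fun g' hg' => Nat.find_min hPg hg'⟩
    have hg0pos : 0 < g0 := by
      rcases Nat.eq_zero_or_pos g0 with h0 | hpos'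
      · exfalso
        rw [h0] at hpgneg
        norm_num at hpgneg
        linarith
      · exact hpos'
    have hg0lt : g0 < lam2 + 1 + 1 + 1 := by
      by_contra hbig
      push_neg at hbig
      obtain ⟨p0, hp0⟩ := hpos
      obtain ⟨q0, hq0⟩ := hneg
      refine hg0min (q0 - p0 : Fin (lam2 + 1 + 1 + 1)).val
        (lt_of_lt_of_le (q0 - p0).isLt hbig) ⟨p0, hp0, ?_⟩
      rw [Fin.cast_val_eq_self, add_comm, sub_add_cancel]
      exact hq0
    have hmid : ∀ i : ℕ, 1 ≤ i → i < g0 →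
        A (r (p + (i : Fin (lam2 + 1 + 1 + 1)))) j = 0 := by
      intro i h1 h2
      by_contra hne
      rcases lt_or_gt_of_ne hne with hlt | hgt
      · exact hg0min i h2 ⟨p, hppos, hlt⟩
      · refine hg0min (g0 - i) (by omega)
          ⟨p + (i : Fin (lam2 + 1 + 1 + 1)), hgt, ?_⟩
        have he : (p + (i : Fin (lam2 + 1 + 1 + 1)))
            + ((g0 - i : ℕ) : Fin (lam2 + 1 + 1 + 1))
            = p + (g0 : Fin (lam2 + 1 + 1 + 1)) := by
          rw [add_assoc p, ← Nat.cast_add]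
          congr 2
          omega
        rw [he]
        exact hpgneg
    rcases eq_or_lt_of_le (show g0 ≤ lam2 + 1 + 1 by omega) with hgeq | hglt
    · -- g0 = lam0 : the support pair is adjacent; build a 2-pattern
      apply hmin 1 (by omega)
      have hcast : ((g0 : ℕ) : Fin (lam2 + 1 + 1 + 1)).val = g0 := Fin.val_cast_of_lt hg0lt
      have hnep : p + (g0 : Fin (lam2 + 1 + 1 + 1)) ≠ p := by
        intro hh
        have h2 : (g0 : Fin (lam2 + 1 + 1 + 1)) = 0 := by
          have h3 := hh.trans (add_zero p).symm
          exact add_left_cancel h3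
        rw [Fin.ext_iff, hcast] at h2
        simp at h2
        omega
      have hadd1 : (p + (g0 : Fin (lam2 + 1 + 1 + 1))) + 1 = p := by
        rw [add_assoc p, ← Nat.cast_add_one]
        have h4 : ((g0 + 1 : ℕ) : Fin (lam2 + 1 + 1 + 1)) = 0 := by
          rw [show g0 + 1 = lam2 + 1 + 1 + 1 by omega]
          exact Fin.natCast_self (lam2 + 1 + 1 + 1)
        rw [h4, add_zero]
      have hs0 : A (r (p + (g0 : Fin (lam2 + 1 + 1 + 1))))
          (c (p + (g0 : Fin (lam2 + 1 + 1 + 1)))) *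
          A (r p) (c (p + (g0 : Fin (lam2 + 1 + 1 + 1)))) < 0 := by
        have h5 := hsign (p + (g0 : Fin (lam2 + 1 + 1 + 1)))
        rwa [hadd1] at h5
      have hs1 : A (r p) j * A (r (p + (g0 : Fin (lam2 + 1 + 1 + 1)))) j < 0 :=
        mul_neg_of_pos_of_neg hppos hpgneg
      exact ⟨![r (p + (g0 : Fin (lam2 + 1 + 1 + 1))), r p],
        ![c (p + (g0 : Fin (lam2 + 1 + 1 + 1))), j],
        inj_pair (fun hh => hnep (hrinj hh)),
        inj_pair (fun hh => hc ⟨_, hh⟩),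
        fun l k hkl hkl1 => by
          rcases fin2_cases l k with h1 | h1
          exacts [absurd h1 hkl, absurd h1 hkl1],
        sign_pair hs0 hs1⟩
    · -- g0 < lam0 : build a pattern of length g0 + 1
      apply hmin g0 hglt
      have hcastlt : ∀ i : Fin (g0 + 1), (i : ℕ) < (lam2 + 1 + 1 + 1) := by
        intro i
        have := i.isLt
        omega
      have hcv : ∀ i : Fin (g0 + 1), (((i : ℕ) : Fin (lam2 + 1 + 1 + 1))).val = (i : ℕ) :=
        fun i => Fin.val_cast_of_lt (hcastlt i)
      have hlastne : ∀ l : Fin (g0 + 1), (l : ℕ) ≠ g0 → l ≠ Fin.last g0 := by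
        intro l hl hh
        apply hl
        rw [hh]
        rfl
      have hval_add_one : ∀ l : Fin (g0 + 1), (l : ℕ) < g0 →
          ((l + 1 : Fin (g0 + 1)) : ℕ) = (l : ℕ) + 1 := by
        intro l hl
        rw [Fin.val_add_one]
        rw [if_neg (hlastne l (by omega))]
      refine ⟨fun i => r (p + ((i : ℕ) : Fin (lam2 + 1 + 1 + 1))),
        fun i => if (i : ℕ) = g0 then j else c (p + ((i : ℕ) : Fin (lam2 + 1 + 1 + 1))), ?_, ?_, ?_, ?_⟩
      · intro a b hab
        have h2 := hrinj hab
        have h3 := add_left_cancel h2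
        have h4 : (a : ℕ) = (b : ℕ) := by
          have h5 := congrArg Fin.val h3
          rwa [hcv a, hcv b] at h5
        exact Fin.ext h4
      · intro a b hab
        beta_reduce at hab
        by_cases ha : (a : ℕ) = g0 <;> by_cases hb : (b : ℕ) = g0
        · exact Fin.ext (ha.trans hb.symm)
        · rw [if_pos ha, if_neg hb] at hab
          exact absurd ⟨_, hab.symm⟩ hc
        · rw [if_neg ha, if_pos hb] at hab
          exact absurd ⟨_, hab⟩ hc
        · rw [if_neg ha, if_neg hb] at hab
          have h2 := hcinj hab
          have h3 := add_left_cancel h2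
          have h4 : (a : ℕ) = (b : ℕ) := by
            have h5 := congrArg Fin.val h3
            rwa [hcv a, hcv b] at h5
          exact Fin.ext h4
      · intro l k hkl hkl1
        beta_reduce
        by_cases hlg : (l : ℕ) = g0
        · rw [if_pos hlg]
          have hlast : l = Fin.last g0 := Fin.ext hlg
          have hl1 : l + 1 = 0 := by rw [hlast]; exact Fin.last_add_one g0
          have hk0 : (k : ℕ) ≠ 0 := by
            intro hh
            apply hkl1
            rw [hl1]
            exact Fin.ext (by simp [hh])
          have hkg : (k : ℕ) ≠ g0 := fun hh => hkl (Fin.ext (hh.trans hlg.symm))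
          exact hmid (k : ℕ) (by omega) (by have := k.isLt; omega)
        · rw [if_neg hlg]
          have hllt : (l : ℕ) < g0 := by have := l.isLt; omega
          apply hzero (p + ((l : ℕ) : Fin (lam2 + 1 + 1 + 1))) (p + ((k : ℕ) : Fin (lam2 + 1 + 1 + 1)))
          · intro hh
            have h3 := add_left_cancel hh
            apply hkl
            apply Fin.ext
            have h4 := congrArg Fin.val h3
            rwa [hcv k, hcv l] at h4
          · intro hh
            have he : (p + ((l : ℕ) : Fin (lam2 + 1 + 1 + 1))) + 1 = p + ((((l : ℕ) + 1) : ℕ) : Fin (lam2 + 1 + 1 + 1)) := by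
              rw [add_assoc p, Nat.cast_add_one]
            rw [he] at hh
            have h3 := add_left_cancel hh
            apply hkl1
            apply Fin.ext
            have h4 := congrArg Fin.val h3
            rw [hcv k] at h4
            rw [Fin.val_cast_of_lt (show (l : ℕ) + 1 < (lam2 + 1 + 1 + 1) by omega)] at h4
            rw [hval_add_one l hllt]
            exact h4
      · intro l
        beta_reduce
        by_cases hlg : (l : ℕ) = g0
        · rw [if_pos hlg]
          have hlast : l = Fin.last g0 := Fin.ext hlg
          have hl1 : l + 1 = 0 := by rw [hlast]; exact Fin.last_add_one g0
          rw [hl1, hlg]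
          have e0 : (((0 : Fin (g0 + 1)) : ℕ) : Fin (lam2 + 1 + 1 + 1)) = 0 := by simp
          rw [e0, add_zero]
          exact mul_neg_of_neg_of_pos hpgneg hppos
        · rw [if_neg hlg]
          have hllt : (l : ℕ) < g0 := by have := l.isLt; omega
          have he : p + (((l + 1 : Fin (g0 + 1)) : ℕ) : Fin (lam2 + 1 + 1 + 1)) = (p + ((l : ℕ) : Fin (lam2 + 1 + 1 + 1))) + 1 := by
            rw [hval_add_one l hllt, add_assoc p, Nat.cast_add_one]
          rw [he]
          exact hsign (p + ((l : ℕ) : Fin (lam2 + 1 + 1 + 1)))
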